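/- arXiv:1107.0145 — 2 statements merged into one kernel-verified Lean document; each statement's English description precedes it below -/
import Mathlib

section
/- Let S be an N×N Hermitian positive semidefinite complex matrix and ρ > 0. Then (1/N)·log det(S + ρ·I) = log ρ + ∫_ρ^∞ (1/w − (1/N)·tr (S + w·I)^{-1}) dw. -/
open Matrix
open scoped ComplexOrder

open MeasureTheory


theorem matrix_rep {N : ℕ} (S : Matrix (Fin N) (Fin N) ℂ) (hS : S.PosSemidef) (w : ℝ)
    (hw : 0 < w) :
    (S + (w : ℂ) • 1) = (hS.1.eigenvectorUnitary : Matrix (Fin N) (Fin N) ℂ) *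
      diagonal (fun i => ((hS.1.eigenvalues i + w : ℝ) : ℂ)) *
      star (hS.1.eigenvectorUnitary : Matrix (Fin N) (Fin N) ℂ) := by
  set U := (hS.1.eigenvectorUnitary : Matrix (Fin N) (Fin N) ℂ) with hU
  have hU1 : U * star U = 1 := mem_unitaryGroup_iff.mp hS.1.eigenvectorUnitary.2
  have hd : diagonal (fun i => ((hS.1.eigenvalues i + w : ℝ) : ℂ))
      = diagonal (RCLike.ofReal ∘ hS.1.eigenvalues) + (w : ℂ) • (1 : Matrix (Fin N) (Fin N) ℂ) := by
    rw [smul_one_eq_diagonal, diagonal_add]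
    congr 1; funext i; simp [Function.comp]
  rw [hd, Matrix.mul_add, Matrix.add_mul, ← (by simpa [hU] using hS.1.spectral_theorem : S = U * diagonal (RCLike.ofReal ∘ hS.1.eigenvalues) * star U), Matrix.mul_smul,
    Matrix.smul_mul, Matrix.mul_one, hU1]

theorem det_re_eq {N : ℕ} (S : Matrix (Fin N) (Fin N) ℂ) (hS : S.PosSemidef) (w : ℝ)
    (hw : 0 < w) : (S + (w : ℂ) • 1).det.re = ∏ i, (hS.1.eigenvalues i + w) := by
  set U := (hS.1.eigenvectorUnitary : Matrix (Fin N) (Fin N) ℂ) with hU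
  have hU1 : U * star U = 1 := mem_unitaryGroup_iff.mp hS.1.eigenvectorUnitary.2
  rw [matrix_rep S hS w hw, det_mul_right_comm, ← hU, hU1, one_mul, det_diagonal,
    ← Complex.ofReal_prod, Complex.ofReal_re]

theorem trace_re_eq {N : ℕ} (S : Matrix (Fin N) (Fin N) ℂ) (hS : S.PosSemidef) (w : ℝ)
    (hw : 0 < w) :
    ((S + (w : ℂ) • 1)⁻¹).trace.re = ∑ i, (hS.1.eigenvalues i + w)⁻¹ := by
  set U := (hS.1.eigenvectorUnitary : Matrix (Fin N) (Fin N) ℂ) with hU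
  have hU1 : U * star U = 1 := mem_unitaryGroup_iff.mp hS.1.eigenvectorUnitary.2
  have hU2 : star U * U = 1 := mem_unitaryGroup_iff'.mp hS.1.eigenvectorUnitary.2
  set d : Fin N → ℂ := fun i => ((hS.1.eigenvalues i + w : ℝ) : ℂ) with hdd
  have hdne : ∀ i, d i ≠ 0 := by
    intro i
    have := hS.eigenvalues_nonneg i
    simp only [hdd, ne_eq, Complex.ofReal_eq_zero]
    positivity
  have hDD : diagonal d * diagonal (fun i => (d i)⁻¹) = 1 := by
    rw [diagonal_mul_diagonal]
    convert diagonal_one with i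
    exact mul_inv_cancel₀ (hdne i)
  have hinv : (S + (w : ℂ) • 1)⁻¹ = U * diagonal (fun i => (d i)⁻¹) * star U := by
    apply inv_eq_right_inv
    rw [matrix_rep S hS w hw, ← hU, ← hdd]
    calc U * diagonal d * star U * (U * diagonal (fun i => (d i)⁻¹) * star U)
        = U * diagonal d * (star U * U) * diagonal (fun i => (d i)⁻¹) * star U := by
          simp only [Matrix.mul_assoc]
      _ = 1 := by rw [hU2, Matrix.mul_one, Matrix.mul_assoc U, hDD, Matrix.mul_one, hU1]
  rw [hinv, Matrix.trace_mul_cycle, hU2, Matrix.one_mul, trace_diagonal]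
  simp only [hdd, ← Complex.ofReal_inv, ← Complex.ofReal_sum, Complex.ofReal_re]

private theorem aux_scalar_int (lam ρ : ℝ) (hl : 0 ≤ lam) (hρ : 0 < ρ) :
    MeasureTheory.IntegrableOn (fun w => 1 / w - (lam + w)⁻¹) (Set.Ioi ρ) ∧
    ∫ w in Set.Ioi ρ, (1 / w - (lam + w)⁻¹) = Real.log (lam + ρ) - Real.log ρ := by
  have hderiv : ∀ x ∈ Set.Ici ρ, HasDerivAt (fun w => Real.log w - Real.log (lam + w))
      (1 / x - (lam + x)⁻¹) x := by
    intro x hx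
    have hx0 : 0 < x := lt_of_lt_of_le hρ hx
    have h1 : HasDerivAt Real.log x⁻¹ x := Real.hasDerivAt_log hx0.ne'
    have h2 : HasDerivAt (fun w => Real.log (lam + w)) (lam + x)⁻¹ x := by
      have := (Real.hasDerivAt_log (by positivity : lam + x ≠ 0)).comp x
        ((hasDerivAt_id x).const_add lam)
      simpa [Function.comp_def] using this
    simpa [one_div, Pi.sub_def] using h1.sub h2
  have hpos : ∀ x ∈ Set.Ioi ρ, 0 ≤ 1 / x - (lam + x)⁻¹ := by
    intro x hx
    have hx0 : 0 < x := hρ.trans hx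
    have : (lam + x)⁻¹ ≤ x⁻¹ := inv_anti₀ hx0 (by linarith)
    simp only [one_div]; linarith
  have htends : Filter.Tendsto (fun w => Real.log w - Real.log (lam + w))
      Filter.atTop (nhds 0) := by
    have h1 : Filter.Tendsto (fun w : ℝ => lam / w + 1) Filter.atTop (nhds 1) := by
      simpa using (tendsto_const_nhds.div_atTop (Filter.tendsto_id (α := ℝ))).add
        (tendsto_const_nhds (x := (1:ℝ)))
    have h2 : Filter.Tendsto (fun w : ℝ => Real.log (lam / w + 1)) Filter.atTop (nhds 0) := by
      have := (Real.continuousAt_log (by norm_num : (1:ℝ) ≠ 0)).tendsto.comp h1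
      simpa [Function.comp_def] using this
    refine h2.neg.congr' ?_ |>.mono_right (by simp)
    filter_upwards [Filter.eventually_gt_atTop 0] with w hw
    have : lam / w + 1 = (lam + w) / w := by field_simp
    rw [this, Real.log_div (by positivity) hw.ne']
    ring
  refine ⟨MeasureTheory.integrableOn_Ioi_deriv_of_nonneg' hderiv hpos htends, ?_⟩
  rw [MeasureTheory.integral_Ioi_of_hasDerivAt_of_nonneg' hderiv hpos htends]; ring

theorem log_det_eq_log_add_integral {N : ℕ} (hN : 0 < N)
    (S : Matrix (Fin N) (Fin N) ℂ) (hS : S.PosSemidef) (ρ : ℝ) (hρ : 0 < ρ) :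
    (N : ℝ)⁻¹ * Real.log ((S + (ρ : ℂ) • 1).det.re)
      = Real.log ρ + ∫ w in Set.Ioi ρ,
          (1 / w - (N : ℝ)⁻¹ * (((S + (w : ℂ) • 1)⁻¹).trace.re)) := by
  classical
  set lam := hS.1.eigenvalues with hlam
  have hl : ∀ i, 0 ≤ lam i := hS.eigenvalues_nonneg
  have hNne : (N : ℝ) ≠ 0 := Nat.cast_ne_zero.mpr hN.ne'
  -- integrability of each scalar piece
  have hint : ∀ i : Fin N, IntegrableOn (fun w => 1 / w - (lam i + w)⁻¹) (Set.Ioi ρ) :=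
    fun i => (aux_scalar_int (lam i) ρ (hl i) hρ).1
  -- rewrite the integrand
  have hcongr : ∫ w in Set.Ioi ρ, (1 / w - (N : ℝ)⁻¹ * (((S + (w : ℂ) • 1)⁻¹).trace.re))
      = ∫ w in Set.Ioi ρ, ∑ i, (N : ℝ)⁻¹ * (1 / w - (lam i + w)⁻¹) := by
    refine setIntegral_congr_fun measurableSet_Ioi (fun w hw => ?_)
    have hw0 : 0 < w := hρ.trans hw
    rw [trace_re_eq S hS w hw0, ← hlam]
    rw [← Finset.mul_sum, Finset.sum_sub_distrib, Finset.sum_const, Finset.card_univ,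
      Fintype.card_fin, nsmul_eq_mul, mul_sub, ← mul_assoc, inv_mul_cancel₀ hNne, one_mul]
  rw [hcongr, integral_finset_sum _ (fun i _ => (hint i).const_mul _)]
  have hval : ∀ i : Fin N, ∫ w in Set.Ioi ρ, (N : ℝ)⁻¹ * (1 / w - (lam i + w)⁻¹)
      = (N : ℝ)⁻¹ * (Real.log (lam i + ρ) - Real.log ρ) := by
    intro i
    rw [integral_const_mul, (aux_scalar_int (lam i) ρ (hl i) hρ).2]
  simp_rw [hval]
  rw [det_re_eq S hS ρ hρ, ← hlam, Real.log_prod (fun i _ => by have := hl i; positivity),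
    ← Finset.mul_sum, Finset.sum_sub_distrib, Finset.sum_const, Finset.card_univ,
    Fintype.card_fin, nsmul_eq_mul, mul_sub, ← mul_assoc, inv_mul_cancel₀ hNne, one_mul]
  ring
end

section
/- Let T be an N×N Hermitian positive definite matrix and D an N×N Hermitian positive semidefinite matrix. Then tr(D²) ≤ tr(TDTD) · ‖T^{-1}‖². -/
open Matrix
open scoped ComplexOrder

section aux

section
open scoped MatrixOrder
variable {n : Type*} [Fintype n] [DecidableEq n]
noncomputable def Matrix.PosSemidef.sqrt {A : Matrix n n ℂ} (_ : A.PosSemidef) : Matrix n n ℂ :=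
  CFC.sqrt A
theorem Matrix.PosSemidef.posSemidef_sqrt {A : Matrix n n ℂ} (hA : A.PosSemidef) :
    hA.sqrt.PosSemidef :=
  (CFC.sqrt_nonneg A).posSemidef
theorem Matrix.PosSemidef.sqrt_mul_self {A : Matrix n n ℂ} (hA : A.PosSemidef) :
    hA.sqrt * hA.sqrt = A :=
  CFC.sqrt_mul_sqrt_self A hA.nonneg
end

variable {n : Type*} [Fintype n] [DecidableEq n]

private lemma diag_re_nonneg {M : Matrix n n ℂ} (hM : M.PosSemidef) (i : n) :
    0 ≤ (M i i).re := by
  have h := hM.re_dotProduct_nonneg (Pi.single i 1)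
  simpa [dotProduct, Matrix.mulVec, Pi.single_apply] using h

private lemma trace_re_nonneg {M : Matrix n n ℂ} (hM : M.PosSemidef) :
    0 ≤ M.trace.re := by
  rw [Matrix.trace, Complex.re_sum]
  exact Finset.sum_nonneg fun i _ => diag_re_nonneg hM i

private lemma trace_mul_re_nonneg {P Q : Matrix n n ℂ} (hP : P.PosSemidef)
    (hQ : Q.PosSemidef) : 0 ≤ (P * Q).trace.re := by
  have h1 : (hP.sqrt * Q * hP.sqrt).PosSemidef := by
    have := hQ.conjTranspose_mul_mul_same hP.sqrt
    rwa [hP.posSemidef_sqrt.isHermitian.eq] at this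
  have h2 : (hP.sqrt * Q * hP.sqrt).trace = (P * Q).trace := by
    rw [Matrix.trace_mul_cycle, hP.sqrt_mul_self]
  rw [← h2]
  exact trace_re_nonneg h1

private lemma smul_posSemidef {A : Matrix n n ℂ} (hA : A.PosSemidef) {c : ℝ}
    (hc : 0 ≤ c) : ((c : ℂ) • A).PosSemidef := by
  refine Matrix.posSemidef_iff_dotProduct_mulVec.mpr ⟨?_, fun x => ?_⟩
  · unfold Matrix.IsHermitian
    rw [Matrix.conjTranspose_smul, hA.isHermitian.eq, Complex.star_def, Complex.conj_ofReal]
  · rw [Matrix.smul_mulVec, dotProduct_smul]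
    have h0 : (0:ℂ) ≤ (c:ℂ) := by
      rw [Complex.le_def]
      simp [hc]
    exact mul_nonneg h0 (hA.dotProduct_mulVec_nonneg x)

private lemma loewner_le_norm {B : Matrix n n ℂ} (hB : B.PosSemidef) :
    (((‖Matrix.toEuclideanCLM (𝕜 := ℂ) B‖ : ℝ) : ℂ) • 1 - B).PosSemidef := by
  set c : ℝ := ‖Matrix.toEuclideanCLM (𝕜 := ℂ) B‖ with hc
  refine Matrix.posSemidef_iff_dotProduct_mulVec.mpr ⟨?_, fun x => ?_⟩
  · unfold Matrix.IsHermitian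
    rw [Matrix.conjTranspose_sub, Matrix.conjTranspose_smul, Matrix.conjTranspose_one,
      hB.isHermitian.eq, Complex.star_def, Complex.conj_ofReal]
  · have hz := hB.dotProduct_mulVec_nonneg x
    set z : ℂ := dotProduct (star x) (B *ᵥ x) with hzdef
    have hw : dotProduct (star x) ((1 : Matrix n n ℂ) *ᵥ x)
        = dotProduct (star x) x := by rw [Matrix.one_mulVec]
    rw [Matrix.sub_mulVec, dotProduct_sub, Matrix.smul_mulVec,
      dotProduct_smul, hw, smul_eq_mul, ← hzdef]
    -- interpret things in EuclideanSpace
    set y : EuclideanSpace ℂ n := (WithLp.equiv 2 (n → ℂ)).symm x with hy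
    have hinner : (inner ℂ y ((Matrix.toEuclideanCLM (𝕜 := ℂ) B) y) : ℂ) = z := by
      rw [hy, WithLp.equiv_symm_apply, Matrix.toEuclideanCLM_toLp,
        EuclideanSpace.inner_toLp_toLp, dotProduct_comm, hzdef]
    have hself : (inner ℂ y y : ℂ) = dotProduct (star x) x := by
      rw [hy, WithLp.equiv_symm_apply, EuclideanSpace.inner_toLp_toLp, dotProduct_comm]
    -- z is nonneg real
    have hzim : z.im = 0 := by
      rw [Complex.le_def] at hz
      simpa using hz.2.symm
    have hzre : z = (z.re : ℂ) := Complex.ext (by simp) (by simp [hzim])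
    have hw0 : (0:ℂ) ≤ dotProduct (star x) x := by
      simpa [Matrix.one_mulVec] using (Matrix.PosSemidef.one (n := n) (R := ℂ)).dotProduct_mulVec_nonneg x
    have hwim : (dotProduct (star x) x).im = 0 := by
      rw [Complex.le_def] at hw0
      simpa using hw0.2.symm
    have hwre : dotProduct (star x) x = ((dotProduct (star x) x).re : ℂ) :=
      Complex.ext (by simp) (by simp [hwim])
    -- key real inequality
    have hnorm : z.re ≤ c * (dotProduct (star x) x).re := by
      have h1 : z.re ≤ ‖z‖ := Complex.re_le_norm z
      have h2 : ‖(inner ℂ y ((Matrix.toEuclideanCLM (𝕜 := ℂ) B) y) : ℂ)‖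
          ≤ ‖y‖ * ‖(Matrix.toEuclideanCLM (𝕜 := ℂ) B) y‖ := norm_inner_le_norm _ _
      have h3 : ‖(Matrix.toEuclideanCLM (𝕜 := ℂ) B) y‖ ≤ c * ‖y‖ :=
        (Matrix.toEuclideanCLM (𝕜 := ℂ) B).le_opNorm y
      have h4 : (dotProduct (star x) x).re = ‖y‖ ^ 2 := by
        rw [← hself, ← RCLike.re_to_complex]
        exact inner_self_eq_norm_sq y
      calc z.re ≤ ‖z‖ := h1
        _ = ‖(inner ℂ y ((Matrix.toEuclideanCLM (𝕜 := ℂ) B) y) : ℂ)‖ := by rw [hinner]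
        _ ≤ ‖y‖ * ‖(Matrix.toEuclideanCLM (𝕜 := ℂ) B) y‖ := h2
        _ ≤ ‖y‖ * (c * ‖y‖) := mul_le_mul_of_nonneg_left h3 (norm_nonneg y)
        _ = c * ‖y‖ ^ 2 := by ring
        _ = c * (dotProduct (star x) x).re := by rw [h4]
    rw [hwre, hzre]
    have heq : (c : ℂ) * ((dotProduct (star x) x).re : ℂ) - ((z.re : ℂ))
        = ((c * (dotProduct (star x) x).re - z.re : ℝ) : ℂ) := by
      push_cast; ring
    rw [heq, Complex.zero_le_real]
    linarith

private lemma key_ineq {A B : Matrix n n ℂ} (hA : A.PosSemidef) (hB : B.PosSemidef)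
    {c : ℝ} (hc : 0 ≤ c) (h : ((c : ℂ) • 1 - B).PosSemidef) :
    (A * B * A * B).trace.re ≤ c ^ 2 * (A * A).trace.re := by
  set R := hA.sqrt with hRdef
  have hRR : R * R = A := hA.sqrt_mul_self
  have hRH : Rᴴ = R := hA.posSemidef_sqrt.isHermitian.eq
  set X := R * B * R with hX
  set Y := (c : ℂ) • A with hY
  have hXps : X.PosSemidef := by
    have := hB.conjTranspose_mul_mul_same R
    rwa [hRH] at this
  have hYmX : (Y - X).PosSemidef := by
    have h2 := h.conjTranspose_mul_mul_same R
    rw [hRH] at h2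
    have he : R * ((c : ℂ) • 1 - B) * R = Y - X := by
      simp only [Matrix.mul_sub, Matrix.sub_mul, Matrix.mul_smul, Matrix.smul_mul,
        Matrix.mul_one, hRR, hX, hY]
    rwa [he] at h2
  have hYpX : (Y + X).PosSemidef := (smul_posSemidef hA hc).add hXps
  -- trace difference
  have hdiff : (Y * Y).trace - (X * X).trace
      = ((Y - X) * (Y + X)).trace := by
    have : (Y - X) * (Y + X) = Y * Y - X * X + (Y * X - X * Y) := by
      noncomm_ring
    rw [this, Matrix.trace_add, Matrix.trace_sub, Matrix.trace_sub,
      Matrix.trace_mul_comm Y X, sub_self, add_zero]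
  have hle : (X * X).trace.re ≤ (Y * Y).trace.re := by
    have h0 : 0 ≤ ((Y - X) * (Y + X)).trace.re := trace_mul_re_nonneg hYmX hYpX
    have : ((Y * Y).trace - (X * X).trace).re = (Y*Y).trace.re - (X*X).trace.re := by
      rw [Complex.sub_re]
    rw [hdiff] at this
    linarith [this ▸ h0]
  -- identify traces
  have hXX : (X * X).trace = (A * B * A * B).trace := by
    have e1 : X * X = (R * B * A * B) * R := by
      rw [hX, ← hRR]
      noncomm_ring
    rw [e1, Matrix.trace_mul_comm, ← Matrix.mul_assoc, ← Matrix.mul_assoc,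
      ← Matrix.mul_assoc, hRR]
  have hYY : (Y * Y).trace.re = c ^ 2 * (A * A).trace.re := by
    have : Y * Y = ((c : ℂ) * (c : ℂ)) • (A * A) := by
      rw [hY, Matrix.smul_mul, Matrix.mul_smul, smul_smul]
    rw [this, Matrix.trace_smul, smul_eq_mul]
    have h2 : ((c:ℂ) * (c:ℂ)) = ((c ^ 2 : ℝ) : ℂ) := by push_cast; ring
    rw [h2, Complex.re_ofReal_mul]
  rw [← hXX, ← hYY]
  exact hle

end aux

theorem trace_sq_le_trace_TDTD_mul_opNorm_inv_sq {N : ℕ}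
    (T D : Matrix (Fin N) (Fin N) ℂ) (hT : T.PosDef) (hD : D.PosSemidef) :
    ((D * D).trace).re
      ≤ ((T * D * T * D).trace).re * ‖Matrix.toEuclideanCLM (𝕜 := ℂ) T⁻¹‖ ^ 2 := by
  set c : ℝ := ‖Matrix.toEuclideanCLM (𝕜 := ℂ) T⁻¹‖ with hc
  have hc0 : 0 ≤ c := norm_nonneg _
  set S := hT.posSemidef.sqrt with hSdef
  have hSS : S * S = T := hT.posSemidef.sqrt_mul_self
  have hSH : Sᴴ = S := hT.posSemidef.posSemidef_sqrt.isHermitian.eq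
  -- S is invertible
  have hdetT : T.det ≠ 0 := hT.det_pos.ne'
  have hdetS : IsUnit S.det := by
    rw [isUnit_iff_ne_zero]
    intro h0
    apply hdetT
    rw [← hSS, Matrix.det_mul, h0, mul_zero]
  have hSinv : S * T⁻¹ * S = 1 := by
    rw [← hSS, Matrix.mul_inv_rev, ← Matrix.mul_assoc,
      Matrix.mul_nonsing_inv S hdetS, Matrix.one_mul,
      Matrix.nonsing_inv_mul S hdetS]
  have hTinv : T⁻¹.PosSemidef := hT.posSemidef.inv
  set M := S * D * S with hM
  have hMps : M.PosSemidef := by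
    have := hD.conjTranspose_mul_mul_same S
    rwa [hSH] at this
  have hkey := key_ineq hMps hTinv hc0 (loewner_le_norm hTinv)
  -- (M * T⁻¹ * M * T⁻¹).trace = (D * D).trace
  have e1 : (M * T⁻¹ * M * T⁻¹).trace = (D * D).trace := by
    have h1 : M * T⁻¹ * M * T⁻¹ = (S * (D * D)) * (S * T⁻¹) := by
      calc M * T⁻¹ * M * T⁻¹ = S * D * (S * T⁻¹ * S) * D * (S * T⁻¹) := by
            rw [hM]; noncomm_ring
        _ = (S * (D * D)) * (S * T⁻¹) := by rw [hSinv]; noncomm_ring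
    rw [h1, Matrix.trace_mul_comm, ← Matrix.mul_assoc, hSinv, Matrix.one_mul]
  -- (M * M).trace = (T * D * T * D).trace
  have e2 : (M * M).trace = (T * D * T * D).trace := by
    have h1 : M * M = (S * D * T * D) * S := by
      rw [hM, ← hSS]
      noncomm_ring
    rw [h1, Matrix.trace_mul_comm, ← Matrix.mul_assoc, ← Matrix.mul_assoc,
      ← Matrix.mul_assoc, hSS]
  rw [e1, e2] at hkey
  calc (D * D).trace.re ≤ c ^ 2 * (T * D * T * D).trace.re := hkey
    _ = (T * D * T * D).trace.re * c ^ 2 := by ring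
end
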